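/- (Lemma C.2, quantitative lower bound in rescaled form) Let s > 0 and let N be a real number with 2s < N < 4s. Define F : (0,∞) → ℝ by F(t) := t^{2s} − t^{N−2s}, and set t₀ := ((N−2s)/(2s))^{1/(4s−N)}. Then t₀ is the unique global minimum point of F on (0,∞), and there exists c > 0 such that F(t) − F(t₀) ≥ c·(t−t₀)² for all t ∈ (0, 2t₀], and F(t) − F(t₀) ≥ c·t₀^{N−2s} for all t > 2t₀. -/

import Mathlib

open Real

noncomputable section

open Set

lemma gderiv (a b : ℝ) (ha : 0 < a) {u : ℝ} (hu : 0 < u) :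
    HasDerivAt (fun u : ℝ => b / a * u ^ a - u ^ b)
      (b * u ^ (b - 1) * (u ^ (a - b) - 1)) u := by
  have h1 : HasDerivAt (fun u : ℝ => u ^ a) (a * u ^ (a - 1)) u :=
    Real.hasDerivAt_rpow_const (Or.inl hu.ne')
  have h2 : HasDerivAt (fun u : ℝ => u ^ b) (b * u ^ (b - 1)) u :=
    Real.hasDerivAt_rpow_const (Or.inl hu.ne')
  have h3 := (h1.const_mul (b / a)).sub h2
  have key : b / a * (a * u ^ (a - 1)) - b * u ^ (b - 1)
      = b * u ^ (b - 1) * (u ^ (a - b) - 1) := by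
    have : u ^ (a - 1) = u ^ (b - 1) * u ^ (a - b) := by
      rw [← Real.rpow_add hu]; ring_nf
    rw [this]; field_simp
  rwa [key] at h3

lemma gcont (a b : ℝ) (ha : 0 < a) {D : Set ℝ} (hD : ∀ x ∈ D, 0 < x) :
    ContinuousOn (fun u : ℝ => b / a * u ^ a - u ^ b) D := fun x hx =>
  ((gderiv a b ha (hD x hx)).continuousAt).continuousWithinAt

lemma gmono (a b : ℝ) (hb : 0 < b) (hab : b < a) :
    StrictMonoOn (fun u : ℝ => b / a * u ^ a - u ^ b) (Ici 1) := by
  have ha : 0 < a := hb.trans hab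
  apply strictMonoOn_of_hasDerivWithinAt_pos (convex_Ici 1)
    (gcont a b ha (fun x hx => lt_of_lt_of_le one_pos hx))
    (f' := fun u => b * u ^ (b - 1) * (u ^ (a - b) - 1))
  · intro x hx
    rw [interior_Ici] at hx
    exact (gderiv a b ha (lt_trans one_pos hx)).hasDerivWithinAt
  · intro x hx
    rw [interior_Ici] at hx
    have hx0 : (0:ℝ) < x := lt_trans one_pos hx
    have h1 : (1:ℝ) < x ^ (a - b) :=
      Real.one_lt_rpow_iff_of_pos hx0 |>.2 (Or.inl ⟨hx, by linarith⟩)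
    have h2 : (0:ℝ) < x ^ (b - 1) := Real.rpow_pos_of_pos hx0 (b - 1)
    have : (0:ℝ) < b * x ^ (b - 1) := mul_pos hb h2
    nlinarith

lemma ganti (a b : ℝ) (hb : 0 < b) (hab : b < a) :
    StrictAntiOn (fun u : ℝ => b / a * u ^ a - u ^ b) (Ioc 0 1) := by
  have ha : 0 < a := hb.trans hab
  apply strictAntiOn_of_hasDerivWithinAt_neg (convex_Ioc 0 1)
    (gcont a b ha (fun x hx => hx.1))
    (f' := fun u => b * u ^ (b - 1) * (u ^ (a - b) - 1))
  · intro x hx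
    rw [interior_Ioc] at hx
    exact (gderiv a b ha hx.1).hasDerivWithinAt
  · intro x hx
    rw [interior_Ioc] at hx
    have hx0 : (0:ℝ) < x := hx.1
    have h1 : x ^ (a - b) < 1 :=
      Real.rpow_lt_one hx0.le hx.2 (by linarith)
    have h2 : (0:ℝ) < x ^ (b - 1) := Real.rpow_pos_of_pos hx0 (b - 1)
    nlinarith [mul_pos hb h2]

-- bound on u^(b-1) on [1/2,2]
lemma mbound (b : ℝ) {u : ℝ} (h1 : (1/2:ℝ) ≤ u) (h2 : u ≤ 2) :
    (2:ℝ) ^ (-|b - 1|) ≤ u ^ (b - 1) := by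
  have hu0 : (0:ℝ) < u := by linarith
  have hlog : |Real.log u| ≤ Real.log 2 := by
    rw [abs_le]
    constructor
    · have : Real.log u⁻¹ ≤ Real.log 2 :=
        Real.log_le_log (by positivity) (by rw [inv_le_comm₀ hu0 two_pos]; linarith)
      rw [Real.log_inv] at this; linarith
    · exact Real.log_le_log hu0 h2
  have key : Real.log 2 * (-|b - 1|) ≤ (b - 1) * Real.log u := by
    have h3 : |(b - 1) * Real.log u| ≤ |b - 1| * Real.log 2 := by
      rw [abs_mul]
      exact mul_le_mul_of_nonneg_left hlog (abs_nonneg _)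
    have h4 := neg_abs_le ((b - 1) * Real.log u)
    nlinarith
  rw [Real.rpow_def_of_pos two_pos, Real.rpow_def_of_pos hu0]
  exact Real.exp_le_exp.2 (by rw [mul_comm (Real.log u)]; exact key)

-- u^p - 1 ≥ p (u-1) / 2 for 1 ≤ u ≤ 2, p ≥ 0
lemma lowbd_pos {p u : ℝ} (hp : 0 ≤ p) (h1 : 1 ≤ u) (h2 : u ≤ 2) :
    p * (u - 1) / 2 ≤ u ^ p - 1 := by
  have hu0 : (0:ℝ) < u := by linarith
  have hlog : 1 - u⁻¹ ≤ Real.log u := by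
    have := Real.log_le_sub_one_of_pos (inv_pos.2 hu0)
    rw [Real.log_inv] at this; linarith
  have hlog2 : (u - 1) / 2 ≤ Real.log u := by
    have hinv : u⁻¹ ≤ 1 := by rw [inv_le_one_iff₀]; right; linarith
    have : (u - 1) / 2 ≤ 1 - u⁻¹ := by
      rw [div_le_iff₀ (by norm_num : (0:ℝ) < 2)]
      have h : u * u⁻¹ = 1 := mul_inv_cancel₀ hu0.ne'
      nlinarith
    linarith
  have hexp : 1 + p * Real.log u ≤ u ^ p := by
    rw [Real.rpow_def_of_pos hu0, mul_comm (Real.log u) p]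
    linarith [Real.add_one_le_exp (p * Real.log u)]
  have hlognn : 0 ≤ Real.log u := Real.log_nonneg h1
  nlinarith [mul_le_mul_of_nonneg_left hlog2 hp]

-- 1 - u^p ≥ p 2^{-p} (1-u) for 1/2 ≤ u ≤ 1, p ≥ 0
lemma lowbd_neg {p u : ℝ} (hp : 0 ≤ p) (h1 : (1/2:ℝ) ≤ u) (h2 : u ≤ 1) :
    p * (2:ℝ) ^ (-p) * (1 - u) ≤ 1 - u ^ p := by
  have hu0 : (0:ℝ) < u := by linarith
  set x := p * Real.log u with hx
  have he : u ^ p = Real.exp x := by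
    rw [Real.rpow_def_of_pos hu0, mul_comm]
  have hepos : (0:ℝ) < u ^ p := Real.rpow_pos_of_pos hu0 p
  have key : (-x) * u ^ p ≤ 1 - u ^ p := by
    have := Real.add_one_le_exp (-x)
    rw [Real.exp_neg, ← he] at this
    have h4 : ((-x) + 1) * u ^ p ≤ 1 := by
      have hm := mul_le_mul_of_nonneg_right this hepos.le
      rw [inv_mul_cancel₀ hepos.ne'] at hm
      linarith
    nlinarith
  have hxlow : p * (1 - u) ≤ -x := by
    have := Real.log_le_sub_one_of_pos hu0
    have : -(Real.log u) ≥ 1 - u := by linarith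
    rw [hx]
    nlinarith
  have hup : (2:ℝ) ^ (-p) ≤ u ^ p := by
    have h5 : ((1:ℝ)/2) ^ p ≤ u ^ p := Real.rpow_le_rpow (by norm_num) h1 hp
    have h6 : ((1:ℝ)/2) ^ p = (2:ℝ) ^ (-p) := by
      rw [Real.rpow_neg (by norm_num : (0:ℝ) ≤ 2), one_div, Real.inv_rpow (by norm_num : (0:ℝ) ≤ 2)]
    linarith [h6 ▸ h5]
  have hxnn : 0 ≤ -x := by nlinarith [Real.log_nonpos (by linarith) h2]
  have h2p : (0:ℝ) ≤ (2:ℝ) ^ (-p) := (Real.rpow_pos_of_pos two_pos _).le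
  have hprod : p * (1 - u) * ((2:ℝ) ^ (-p)) ≤ (-x) * u ^ p :=
    mul_le_mul hxlow hup h2p hxnn
  nlinarith

lemma gquad (a b : ℝ) (hb : 0 < b) (hab : b < a) :
    ∃ c₂ : ℝ, 0 < c₂ ∧ ∀ u ∈ Icc (1/2:ℝ) 2,
      c₂ * (u - 1) ^ 2 ≤ (b / a * u ^ a - u ^ b) - (b / a * 1 ^ a - 1 ^ b) := by
  have ha : 0 < a := hb.trans hab
  have hp : 0 < a - b := by linarith
  set m : ℝ := (2:ℝ) ^ (-|b - 1|) with hm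
  have hm0 : 0 < m := Real.rpow_pos_of_pos two_pos _
  set q : ℝ := (2:ℝ) ^ (-(a - b)) with hq
  have hq0 : 0 < q := Real.rpow_pos_of_pos two_pos _
  have hq1 : q ≤ 1 := Real.rpow_le_one_of_one_le_of_nonpos one_le_two (by linarith)
  set c₂ : ℝ := b * m * (a - b) * q / 4 with hc₂
  have hc₂0 : 0 < c₂ := by positivity
  refine ⟨c₂, hc₂0, ?_⟩
  set g : ℝ → ℝ := fun u => b / a * u ^ a - u ^ b with hg
  set φ : ℝ → ℝ := fun u => g u - g 1 - c₂ * (u - 1) ^ 2 with hφ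
  have hφderiv : ∀ u : ℝ, 0 < u →
      HasDerivAt φ (b * u ^ (b - 1) * (u ^ (a - b) - 1) - c₂ * (2 * (u - 1))) u := by
    intro u hu
    have h1 := gderiv a b ha hu
    have h2 : HasDerivAt (fun u : ℝ => g 1 + c₂ * (u - 1) ^ 2)
        (c₂ * (2 * (u - 1) ^ 1 * 1)) u :=
      ((((hasDerivAt_id u).sub_const 1).pow 2).const_mul c₂).const_add (g 1)
    have h3 := h1.sub h2
    have : b * u ^ (b - 1) * (u ^ (a - b) - 1) - c₂ * (2 * (u - 1) ^ 1 * 1)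
        = b * u ^ (b - 1) * (u ^ (a - b) - 1) - c₂ * (2 * (u - 1)) := by ring
    rw [this] at h3
    have e : φ = (fun u => b / a * u ^ a - u ^ b) - fun u => g 1 + c₂ * (u - 1) ^ 2 := by
      funext u; simp only [hφ, hg, Pi.sub_apply]; ring
    rw [e]; exact h3
  -- derivative nonneg on (1,2)
  have hpos : ∀ u ∈ interior (Icc (1:ℝ) 2),
      0 ≤ b * u ^ (b - 1) * (u ^ (a - b) - 1) - c₂ * (2 * (u - 1)) := by
    intro u hu
    rw [interior_Icc] at hu
    obtain ⟨hu1, hu2⟩ := hu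
    have hmb : m ≤ u ^ (b - 1) := mbound b (by linarith) hu2.le
    have hlb := lowbd_pos hp.le hu1.le hu2.le
    have hub : c₂ * (2 * (u - 1)) ≤ b * m * ((a - b) * (u - 1) / 2) := by
      rw [hc₂]
      have h1 : 0 ≤ u - 1 := by linarith
      have hK : 0 ≤ b * m * (a - b) := by positivity
      nlinarith [mul_le_mul_of_nonneg_right hq1 (mul_nonneg hK h1)]
    have h2 : b * m * ((a - b) * (u - 1) / 2) ≤ b * u ^ (b - 1) * (u ^ (a - b) - 1) := by
      have h3 : 0 ≤ (a - b) * (u - 1) / 2 := by nlinarith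
      have h4 : b * m ≤ b * u ^ (b - 1) := by nlinarith
      have h5 : 0 < b * u ^ (b - 1) := mul_pos hb (Real.rpow_pos_of_pos (by linarith) _)
      nlinarith
    linarith
  -- derivative nonpos on (1/2,1)
  have hneg : ∀ u ∈ interior (Icc (1/2:ℝ) 1),
      b * u ^ (b - 1) * (u ^ (a - b) - 1) - c₂ * (2 * (u - 1)) ≤ 0 := by
    intro u hu
    rw [interior_Icc] at hu
    obtain ⟨hu1, hu2⟩ := hu
    have hmb : m ≤ u ^ (b - 1) := mbound b hu1.le (by linarith)
    have hlb := lowbd_neg hp.le hu1.le hu2.le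
    -- u^(a-b) - 1 ≤ -((a-b) * q * (1-u))
    have h1 : u ^ (a - b) - 1 ≤ -((a - b) * q * (1 - u)) := by
      rw [hq]; nlinarith [hlb]
    have h1' : 0 ≤ (a - b) * q * (1 - u) := by
      have : 0 ≤ 1 - u := by linarith
      positivity
    have h4 : b * m ≤ b * u ^ (b - 1) := by nlinarith
    have h5 : 0 < b * u ^ (b - 1) := mul_pos hb (Real.rpow_pos_of_pos (by linarith) _)
    have h6 : b * u ^ (b - 1) * (u ^ (a - b) - 1) ≤ b * m * (-((a - b) * q * (1 - u))) := by
      nlinarith [mul_pos hb hm0]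
    have h7 : c₂ * (2 * (u - 1)) = -(b * m * (a - b) * q / 2 * (1 - u)) := by
      rw [hc₂]; ring
    rw [h7]
    have h8 : b * m * (a - b) * q / 2 * (1 - u) ≤ b * m * ((a - b) * q * (1 - u)) := by
      nlinarith [mul_pos (mul_pos hb hm0) (mul_pos hp hq0)]
    linarith
  have hmono : MonotoneOn φ (Icc 1 2) := by
    apply monotoneOn_of_hasDerivWithinAt_nonneg (convex_Icc 1 2)
      (f' := fun u => b * u ^ (b - 1) * (u ^ (a - b) - 1) - c₂ * (2 * (u - 1)))
    · intro x hx
      exact ((hφderiv x (lt_of_lt_of_le one_pos hx.1)).continuousAt).continuousWithinAt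
    · intro x hx
      rw [interior_Icc] at hx
      exact (hφderiv x (by linarith [hx.1])).hasDerivWithinAt
    · exact hpos
  have hanti : AntitoneOn φ (Icc (1/2) 1) := by
    apply antitoneOn_of_hasDerivWithinAt_nonpos (convex_Icc (1/2) 1)
      (f' := fun u => b * u ^ (b - 1) * (u ^ (a - b) - 1) - c₂ * (2 * (u - 1)))
    · intro x hx
      exact ((hφderiv x (by linarith [hx.1])).continuousAt).continuousWithinAt
    · intro x hx
      rw [interior_Icc] at hx
      exact (hφderiv x (by linarith [hx.1])).hasDerivWithinAt
    · exact hneg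
  have hφ1 : φ 1 = 0 := by simp [hφ]
  intro u hu
  have key : 0 ≤ φ u := by
    rcases le_total u 1 with h | h
    · have := hanti ⟨hu.1, h⟩ ⟨by norm_num, le_refl 1⟩ h
      rw [hφ1] at this; exact this
    · have := hmono ⟨le_refl 1, by norm_num⟩ ⟨h, hu.2⟩ h
      rw [hφ1] at this; exact this
  simp only [hφ, hg] at key ⊢
  linarith

lemma master (a b : ℝ) (hb : 0 < b) (hab : b < a) :
    (∀ t : ℝ, 0 < t → t ≠ (b / a) ^ (1 / (a - b)) →
      ((b / a) ^ (1 / (a - b)) : ℝ) ^ a - ((b / a) ^ (1 / (a - b)) : ℝ) ^ b < t ^ a - t ^ b) ∧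
      ∃ c : ℝ, 0 < c ∧
        (∀ t : ℝ, 0 < t → t ≤ 2 * (b / a) ^ (1 / (a - b)) →
          c * (t - (b / a) ^ (1 / (a - b))) ^ 2 ≤
            (t ^ a - t ^ b) -
              (((b / a) ^ (1 / (a - b)) : ℝ) ^ a - ((b / a) ^ (1 / (a - b)) : ℝ) ^ b)) ∧
        (∀ t : ℝ, 2 * (b / a) ^ (1 / (a - b)) < t →
          c * ((b / a) ^ (1 / (a - b)) : ℝ) ^ b ≤
            (t ^ a - t ^ b) -
              (((b / a) ^ (1 / (a - b)) : ℝ) ^ a - ((b / a) ^ (1 / (a - b)) : ℝ) ^ b)) := by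
  have ha : 0 < a := hb.trans hab
  have hp : 0 < a - b := by linarith
  have hba : (0:ℝ) < b / a := div_pos hb ha
  set t0 : ℝ := (b / a) ^ (1 / (a - b)) with ht0def
  have ht0 : 0 < t0 := Real.rpow_pos_of_pos hba _
  have ht0p : t0 ^ (a - b) = b / a := by
    rw [ht0def, ← Real.rpow_mul hba.le, one_div, inv_mul_cancel₀ hp.ne', Real.rpow_one]
  set g : ℝ → ℝ := fun u => b / a * u ^ a - u ^ b with hg
  have hF : ∀ t : ℝ, 0 < t → t ^ a - t ^ b = t0 ^ b * g (t / t0) := by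
    intro t ht
    have h1 : (t / t0) ^ a = t ^ a / t0 ^ a := Real.div_rpow ht.le ht0.le a
    have h1b : (t / t0) ^ b = t ^ b / t0 ^ b := Real.div_rpow ht.le ht0.le b
    have h2 : t0 ^ a = t0 ^ b * (b / a) := by
      rw [show a = b + (a - b) by ring, Real.rpow_add ht0, ht0p]
      ring_nf
    have hb0 : t0 ^ b ≠ 0 := (Real.rpow_pos_of_pos ht0 b).ne'
    have hanz : a ≠ 0 := ha.ne'
    have hbnz : b ≠ 0 := hb.ne'
    simp only [hg, h1, h1b, h2]
    field_simp
  have hFt0 : t0 ^ a - t0 ^ b = t0 ^ b * g 1 := by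
    have := hF t0 ht0
    rwa [div_self ht0.ne'] at this
  have mono := gmono a b hb hab
  have anti := ganti a b hb hab
  have hglt : ∀ u : ℝ, 0 < u → u ≠ 1 → g 1 < g u := by
    intro u hu0 hune
    rcases lt_or_gt_of_ne hune with h | h
    · exact anti ⟨hu0, h.le⟩ ⟨one_pos, le_refl 1⟩ h
    · exact mono (Set.mem_Ici.2 (le_refl 1)) (Set.mem_Ici.2 h.le) h
  have ht0b : (0:ℝ) < t0 ^ b := Real.rpow_pos_of_pos ht0 b
  constructor
  · intro t ht htne
    have hu0 : 0 < t / t0 := div_pos ht ht0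
    have hune : t / t0 ≠ 1 := by
      intro h
      exact htne (by field_simp at h; linarith)
    rw [hF t ht, hFt0]
    exact mul_lt_mul_of_pos_left (hglt _ hu0 hune) ht0b
  · obtain ⟨c₂, hc₂, hquad⟩ := gquad a b hb hab
    have hd1 : 0 < g (1/2) - g 1 := by
      have h : g 1 < g (1/2) :=
        anti (show (1/2:ℝ) ∈ Ioc 0 1 by norm_num) (show (1:ℝ) ∈ Ioc 0 1 by norm_num)
          (by norm_num)
      linarith
    have hd2 : 0 < g 2 - g 1 := by
      have h : g 1 < g 2 :=
        mono (show (1:ℝ) ∈ Ici 1 by norm_num) (show (2:ℝ) ∈ Ici 1 by norm_num) one_lt_two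
      linarith
    have hquad' : ∀ u ∈ Icc (1/2:ℝ) 2, c₂ * (u - 1) ^ 2 ≤ g u - g 1 := hquad
    set c₁ : ℝ := min c₂ (g (1/2) - g 1) with hc₁def
    have hc₁ : 0 < c₁ := lt_min hc₂ hd1
    set c : ℝ := min (c₁ * t0 ^ b / (t0 * t0)) (g 2 - g 1) with hcdef
    have hc : 0 < c := lt_min (by positivity) hd2
    refine ⟨c, hc, ?_, ?_⟩
    · intro t ht hle
      set u : ℝ := t / t0 with hudef
      have hu0 : 0 < u := div_pos ht ht0
      have hu2 : u ≤ 2 := by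
        rw [hudef, div_le_iff₀ ht0]; linarith
      have htt : t = t0 * u := by rw [hudef]; field_simp
      have hsq : (t - t0) ^ 2 = t0 * t0 * (u - 1) ^ 2 := by rw [htt]; ring
      have hcle : c * (t0 * t0) ≤ c₁ * t0 ^ b := by
        have h : c ≤ c₁ * t0 ^ b / (t0 * t0) := min_le_left _ _
        calc c * (t0 * t0) ≤ (c₁ * t0 ^ b / (t0 * t0)) * (t0 * t0) :=
              mul_le_mul_of_nonneg_right h (by positivity)
          _ = c₁ * t0 ^ b := by field_simp
      rw [hF t ht, hFt0, ← hudef, hsq, ← mul_sub]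
      have step1 : c * (t0 * t0 * (u - 1) ^ 2) ≤ c₁ * t0 ^ b * (u - 1) ^ 2 := by
        calc c * (t0 * t0 * (u - 1) ^ 2) = c * (t0 * t0) * (u - 1) ^ 2 := by ring
          _ ≤ c₁ * t0 ^ b * (u - 1) ^ 2 :=
              mul_le_mul_of_nonneg_right hcle (sq_nonneg _)
      have step2 : c₁ * (u - 1) ^ 2 ≤ g u - g 1 := by
        rcases le_or_gt u (1/2) with h | h
        · have hgu : g (1/2) ≤ g u := by
            rcases eq_or_lt_of_le h with he | hlt
            · rw [he]
            · exact le_of_lt (anti (show u ∈ Ioc 0 1 from ⟨hu0, by linarith⟩)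
                (show (1/2:ℝ) ∈ Ioc 0 1 by norm_num) hlt)
          have hsq1 : (u - 1) ^ 2 ≤ 1 := by nlinarith
          have hc1d1 : c₁ ≤ g (1/2) - g 1 := min_le_right _ _
          have h2 := mul_le_mul_of_nonneg_left hsq1 hc₁.le
          calc c₁ * (u - 1) ^ 2 ≤ c₁ * 1 := h2
            _ = c₁ := mul_one _
            _ ≤ g (1/2) - g 1 := hc1d1
            _ ≤ g u - g 1 := sub_le_sub_right hgu (g 1)
        · have hq := hquad' u ⟨h.le, hu2⟩
          have h1 : c₁ ≤ c₂ := min_le_left _ _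
          have := mul_le_mul_of_nonneg_right h1 (sq_nonneg (u - 1))
          linarith
      calc c * (t0 * t0 * (u - 1) ^ 2) ≤ c₁ * t0 ^ b * (u - 1) ^ 2 := step1
        _ = t0 ^ b * (c₁ * (u - 1) ^ 2) := by ring
        _ ≤ t0 ^ b * (g u - g 1) := mul_le_mul_of_nonneg_left step2 ht0b.le
    · intro t hlt
      have ht : 0 < t := lt_trans (by positivity) hlt
      set u : ℝ := t / t0 with hudef
      have hu2 : 2 < u := by
        rw [hudef, lt_div_iff₀ ht0]; linarith
      have hgu : g 2 < g u :=
        mono (show (2:ℝ) ∈ Ici 1 by norm_num) (Set.mem_Ici.2 (by linarith))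
          hu2
      have hcle : c ≤ g 2 - g 1 := min_le_right _ _
      rw [hF t ht, hFt0, ← hudef, ← mul_sub]
      calc c * t0 ^ b ≤ (g 2 - g 1) * t0 ^ b :=
            mul_le_mul_of_nonneg_right hcle ht0b.le
        _ = t0 ^ b * (g 2 - g 1) := by ring
        _ ≤ t0 ^ b * (g u - g 1) := mul_le_mul_of_nonneg_left (by linarith) ht0b.le


/-- The rescaled function `F(t) = t^{2s} - t^{N-2s}` of Lemma C.2. -/
def Fres (s N t : ℝ) : ℝ := t ^ (2 * s) - t ^ (N - 2 * s)

/-- The minimum point `t₀ = ((N-2s)/(2s))^{1/(4s-N)}` of `F` on `(0,∞)`. -/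
def t0res (s N : ℝ) : ℝ := ((N - 2 * s) / (2 * s)) ^ (1 / (4 * s - N))

/-- Lemma C.2, quantitative lower bound in rescaled form: for
`2s < N < 4s`, `t₀` is the unique global minimum point of `F(t) = t^{2s} - t^{N-2s}` on
`(0,∞)`, and there is `c > 0` with `F(t) - F(t₀) ≥ c(t-t₀)²` on `(0, 2t₀]` and
`F(t) - F(t₀) ≥ c t₀^{N-2s}` for `t > 2t₀`. -/
theorem statement16 (s N : ℝ) (hs : 0 < s) (hN1 : 2 * s < N) (hN2 : N < 4 * s) :
    (∀ t : ℝ, 0 < t → t ≠ t0res s N → Fres s N (t0res s N) < Fres s N t) ∧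
      ∃ c : ℝ, 0 < c ∧
        (∀ t : ℝ, 0 < t → t ≤ 2 * t0res s N →
          c * (t - t0res s N) ^ 2 ≤ Fres s N t - Fres s N (t0res s N)) ∧
        (∀ t : ℝ, 2 * t0res s N < t →
          c * t0res s N ^ (N - 2 * s) ≤ Fres s N t - Fres s N (t0res s N)) := by
  have hb : 0 < N - 2 * s := by linarith
  have hab : N - 2 * s < 2 * s := by linarith
  have hM := master (2 * s) (N - 2 * s) hb hab
  have ht0 : t0res s N = ((N - 2 * s) / (2 * s)) ^ (1 / (2 * s - (N - 2 * s))) := by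
    rw [t0res]; congr 2; ring
  simp only [← ht0] at hM
  simp only [Fres]
  exact hM
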